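/- arXiv:0910.0155 — 4 statements merged into one kernel-verified Lean document; each statement's English description precedes it below -/
import Mathlib

section
/- If P and Q are bounded idempotent operators on a Hilbert space with ‖P − Q‖ < 1, then P and Q have the same rank (their ranges have equal, possibly infinite, dimension). -/
lemma stmt3_aux {H : Type*} [NormedAddCommGroup H] [InnerProductSpace ℂ H]
    (P Q : H →L[ℂ] H) (hP : P.comp P = P) (hnorm : ‖P - Q‖ < 1) :
    Module.rank ℂ (LinearMap.range (P : H →ₗ[ℂ] H)) ≤
      Module.rank ℂ (LinearMap.range (Q : H →ₗ[ℂ] H)) := by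
  set R := LinearMap.range (P : H →ₗ[ℂ] H) with hR
  let f : R →ₗ[ℂ] LinearMap.range (Q : H →ₗ[ℂ] H) :=
    ((Q : H →ₗ[ℂ] H).comp R.subtype).codRestrict _
      (fun x => LinearMap.mem_range_self _ _)
  have hinj : Function.Injective f := by
    rw [← LinearMap.ker_eq_bot, Submodule.eq_bot_iff]
    rintro ⟨x, hx⟩ hker
    rw [LinearMap.mem_ker] at hker
    have hQx : Q x = 0 := by
      have := congrArg Subtype.val hker
      simpa [f, LinearMap.codRestrict] using this
    obtain ⟨y, hy⟩ := hx
    have hPx : P x = x := by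
      have : P (P y) = P y := by
        have := congrFun (congrArg DFunLike.coe hP) y
        simpa using this
      have hy' : P y = x := hy
      rwa [hy'] at this
    have hxval : ‖x‖ ≤ ‖P - Q‖ * ‖x‖ := by
      calc ‖x‖ = ‖(P - Q) x‖ := by simp [hPx, hQx]
        _ ≤ ‖P - Q‖ * ‖x‖ := (P - Q).le_opNorm x
    have hx0 : x = 0 := by
      by_contra h
      have hxpos : 0 < ‖x‖ := norm_pos_iff.mpr h
      nlinarith
    exact Subtype.ext hx0
  exact LinearMap.rank_le_of_injective f hinj

/-- Two bounded idempotent operators on a Hilbert space at operator-norm distance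
less than `1` have ranges of the same (possibly infinite) dimension. -/
theorem stmt3 {H : Type*} [NormedAddCommGroup H] [InnerProductSpace ℂ H] [CompleteSpace H]
    (P Q : H →L[ℂ] H) (hP : P.comp P = P) (hQ : Q.comp Q = Q)
    (hnorm : ‖P - Q‖ < 1) :
    Module.rank ℂ (LinearMap.range (P : H →ₗ[ℂ] H)) =
      Module.rank ℂ (LinearMap.range (Q : H →ₗ[ℂ] H)) := by
  have h1 := stmt3_aux P Q hP hnorm
  have h2 := stmt3_aux Q P hQ (by rwa [norm_sub_rev])
  exact le_antisymm h1 h2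
end

section
/- With λ_n(t) = 2^{−n²} √(1 + (t/s_n)²) and s_n = 2^{n−n²}, for every α > 0 the Hölder difference quotients (λ_n'(s_n) − λ_n'(0)) / s_n^α = 2^{n²−2n} s_n^{1−α} / √2 = 2^{n(α(n−1)−1)} / √2 tend to +∞ as n → ∞. -/
open Filter

noncomputable def sSeq (n : ℕ) : ℝ := (2 : ℝ) ^ ((n : ℤ) - (n : ℤ) ^ 2)

noncomputable def lamSeq (n : ℕ) (t : ℝ) : ℝ :=
  (2 : ℝ) ^ (-(n : ℤ) ^ 2) * Real.sqrt (1 + (t / sSeq n) ^ 2)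

lemma sSeq_pos (n : ℕ) : 0 < sSeq n := zpow_pos (by norm_num) _

lemma lamSeq_hasDerivAt (n : ℕ) (t : ℝ) :
    HasDerivAt (lamSeq n)
      ((2 : ℝ) ^ (-(n : ℤ) ^ 2) *
        (t / (sSeq n) ^ 2 / Real.sqrt (1 + (t / sSeq n) ^ 2))) t := by
  have hs := sSeq_pos n
  have h1 : HasDerivAt (fun t : ℝ => 1 + (t / sSeq n) ^ 2)
      (2 * (t / sSeq n) ^ 1 * (1 / sSeq n)) t := by
    have : HasDerivAt (fun t : ℝ => t / sSeq n) (1 / sSeq n) t :=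
      (hasDerivAt_id t).div_const _
    exact ((this.pow 2).const_add 1)
  have hpos : (0:ℝ) < 1 + (t / sSeq n) ^ 2 := by positivity
  have h2 := (h1.sqrt hpos.ne').const_mul ((2 : ℝ) ^ (-(n : ℤ) ^ 2))
  refine h2.congr_deriv ?_
  have hsq : Real.sqrt (1 + (t / sSeq n) ^ 2) ≠ 0 := by positivity
  field_simp

lemma deriv_lamSeq (n : ℕ) (t : ℝ) :
    deriv (lamSeq n) t =
      (2 : ℝ) ^ (-(n : ℤ) ^ 2) *
        (t / (sSeq n) ^ 2 / Real.sqrt (1 + (t / sSeq n) ^ 2)) :=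
  (lamSeq_hasDerivAt n t).deriv

lemma comb (a b c d : ℝ) :
    (2:ℝ) ^ a * ((2:ℝ) ^ b / (2:ℝ) ^ c / Real.sqrt 2) / (2:ℝ) ^ d =
      (2:ℝ) ^ (a + b - c - d) / Real.sqrt 2 := by
  have h1 : ((2:ℝ) ^ c) ≠ 0 := (Real.rpow_pos_of_pos two_pos c).ne'
  have h2 : ((2:ℝ) ^ d) ≠ 0 := (Real.rpow_pos_of_pos two_pos d).ne'
  have h3 : Real.sqrt 2 ≠ 0 := by positivity
  rw [Real.rpow_sub two_pos, Real.rpow_sub two_pos, Real.rpow_add two_pos]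
  field_simp

lemma key (α : ℝ) (n : ℕ) :
    (deriv (lamSeq n) (sSeq n) - deriv (lamSeq n) 0) / (sSeq n) ^ α =
      (2 : ℝ) ^ ((n : ℝ) * (α * ((n : ℝ) - 1) - 1)) / Real.sqrt 2 := by
  have hs := sSeq_pos n
  rw [deriv_lamSeq, deriv_lamSeq]
  have hss : sSeq n / sSeq n = 1 := div_self hs.ne'
  rw [hss]
  simp only [zero_div, div_zero, mul_zero, sub_zero, one_pow]
  rw [show (1:ℝ) + 1 = 2 by norm_num]
  have hcz : ((2:ℝ) ^ (-(n : ℤ) ^ 2)) = (2:ℝ) ^ ((-(n:ℝ)^2) : ℝ) := by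
    rw [← Real.rpow_intCast]; push_cast; ring_nf
  have hsz : sSeq n = (2:ℝ) ^ (((n:ℝ) - (n:ℝ)^2) : ℝ) := by
    rw [sSeq, ← Real.rpow_intCast]; push_cast; ring_nf
  have hsa : (sSeq n) ^ α = (2:ℝ) ^ ((((n:ℝ) - (n:ℝ)^2)) * α) := by
    rw [hsz, ← Real.rpow_mul (by norm_num)]
  rw [hcz, hsa, hsz,
    ← Real.rpow_natCast ((2:ℝ) ^ (((n:ℝ) - (n:ℝ)^2) : ℝ)) 2,
    ← Real.rpow_mul (by norm_num), comb]
  congr 1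
  push_cast
  ring_nf

lemma two_rpow_tendsto : Tendsto (fun x : ℝ => (2:ℝ) ^ x) atTop atTop := by
  simp_rw [Real.rpow_def_of_pos two_pos]
  exact Real.tendsto_exp_atTop.comp
    ((tendsto_id (α := ℝ)).const_mul_atTop (Real.log_pos one_lt_two))

/-- For every `α > 0`, the Hölder difference quotients
`(λ_n'(s_n) - λ_n'(0)) / s_n^α = 2^{n²-2n} s_n^{1-α}/√2 = 2^{n(α(n-1)-1)}/√2`
of the derivatives of the eigenvalues tend to `+∞`. -/
theorem stmt7 (α : ℝ) (hα : 0 < α) :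
    (∀ n : ℕ, (deriv (lamSeq n) (sSeq n) - deriv (lamSeq n) 0) / (sSeq n) ^ α =
      (2 : ℝ) ^ ((n : ℝ) * (α * ((n : ℝ) - 1) - 1)) / Real.sqrt 2) ∧
    Tendsto (fun n : ℕ => (deriv (lamSeq n) (sSeq n) - deriv (lamSeq n) 0) / (sSeq n) ^ α)
      atTop atTop := by
  refine ⟨key α, ?_⟩
  have heq : (fun n : ℕ => (deriv (lamSeq n) (sSeq n) - deriv (lamSeq n) 0) / (sSeq n) ^ α)
      = fun n : ℕ => (2 : ℝ) ^ ((n : ℝ) * (α * ((n : ℝ) - 1) - 1)) / Real.sqrt 2 := by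
    funext n; exact key α n
  rw [heq]
  have hexp : Tendsto (fun n : ℕ => (n : ℝ) * (α * ((n : ℝ) - 1) - 1)) atTop atTop := by
    apply tendsto_atTop_mono' _ _ tendsto_natCast_atTop_atTop
    filter_upwards [eventually_ge_atTop (⌈2 / α + 1⌉₊ + 1)] with n hn
    have hn1 : (⌈2 / α + 1⌉₊ : ℝ) + 1 ≤ (n : ℝ) := by exact_mod_cast hn
    have h2a : 2 / α + 1 + 1 ≤ (n : ℝ) :=
      le_trans (by linarith [Nat.le_ceil (2 / α + 1)]) hn1
    have hnpos : (0:ℝ) < (n : ℝ) := by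
      have : (0:ℝ) < 2 / α + 1 + 1 := by positivity
      linarith
    have : 1 ≤ α * ((n : ℝ) - 1) - 1 := by
      have : 2 / α ≤ (n : ℝ) - 1 - 1 := by linarith
      have := (div_le_iff₀ hα).mp (this.trans (by linarith : (n:ℝ) - 1 - 1 ≤ (n:ℝ) - 1))
      nlinarith
    nlinarith
  exact ((two_rpow_tendsto.comp hexp).atTop_div_const (by positivity))
end

section
/- Let γ be a simple closed C¹ curve in ℂ contained in the resolvent set of a normal operator A with compact resolvent, enclosing exactly the eigenvalue z₀ of A among its eigenvalues. Then P = −(2πi)⁻¹ ∮_γ (A − z)⁻¹ dz is a projection onto the eigenspace of A for the eigenvalue z₀, and its rank equals the multiplicity of z₀. -/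
open scoped InnerProductSpace
open Filter Topology

section Aux

variable {H : Type*} [NormedAddCommGroup H] [InnerProductSpace ℂ H] [CompleteSpace H]

private lemma aux_opNorm_bound (T : H →L[ℂ] H) (N : Submodule ℂ H)
    (hsym : ∀ x y : H, ⟪T x, y⟫_ℂ = ⟪x, T y⟫_ℂ)
    (hTN : ∀ x ∈ N, T x ∈ N) {r : ℝ}
    (hball : ∀ x ∈ N, |(⟪T x, x⟫_ℂ).re| ≤ r * ‖x‖ ^ 2) :
    ∀ x ∈ N, ‖T x‖ ≤ r * ‖x‖ := by
  have hsym' : ∀ u w : H, (⟪T w, u⟫_ℂ).re = (⟪T u, w⟫_ℂ).re := by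
    intro u w
    rw [hsym w u]
    rw [show ⟪w, T u⟫_ℂ = (starRingEnd ℂ) ⟪T u, w⟫_ℂ from (inner_conj_symm w (T u)).symm]
    exact Complex.conj_re _
  have hexp : ∀ u w : H, (⟪T (u + w), u + w⟫_ℂ).re
      = (⟪T u, u⟫_ℂ).re + 2 * (⟪T u, w⟫_ℂ).re + (⟪T w, w⟫_ℂ).re := by
    intro u w
    rw [map_add, inner_add_left, inner_add_right, inner_add_right]
    simp only [Complex.add_re]
    rw [hsym' u w]
    ring
  have hexp2 : ∀ u w : H, (⟪T (u - w), u - w⟫_ℂ).re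
      = (⟪T u, u⟫_ℂ).re - 2 * (⟪T u, w⟫_ℂ).re + (⟪T w, w⟫_ℂ).re := by
    intro u w
    rw [map_sub, inner_sub_left, inner_sub_right, inner_sub_right]
    simp only [Complex.sub_re]
    rw [hsym' u w]
    ring
  have key : ∀ x ∈ N, ∀ y ∈ N, 4 * (⟪T x, y⟫_ℂ).re ≤ 2 * r * (‖x‖ ^ 2 + ‖y‖ ^ 2) := by
    intro x hx y hy
    have h1 := hball (x + y) (N.add_mem hx hy)
    have h2 := hball (x - y) (N.sub_mem hx hy)
    have hpar := parallelogram_law_with_norm ℂ x y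
    have e1 := hexp x y
    have e2 := hexp2 x y
    have a1 := abs_le.mp h1
    have a2 := abs_le.mp h2
    have hp2 : ‖x + y‖ ^ 2 + ‖x - y‖ ^ 2 = 2 * (‖x‖ ^ 2 + ‖y‖ ^ 2) := by
      rw [pow_two, pow_two, pow_two, pow_two]; linarith [hpar]
    have hr2 : r * ‖x + y‖ ^ 2 + r * ‖x - y‖ ^ 2 = 2 * r * (‖x‖ ^ 2 + ‖y‖ ^ 2) := by
      linear_combination r * hp2
    linarith [a1.2, a2.1, e1, e2, hr2]
  intro x hx
  rcases eq_or_ne x 0 with rfl | hxne0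
  · simp
  rcases eq_or_ne (T x) 0 with h0 | hTx
  · rw [h0, norm_zero]
    have h := le_trans (abs_nonneg _) (hball x hx)
    have hxpos : 0 < ‖x‖ := norm_pos_iff.mpr hxne0
    nlinarith
  · have hTxpos : 0 < ‖T x‖ := norm_pos_iff.mpr hTx
    have hxpos : 0 < ‖x‖ := norm_pos_iff.mpr hxne0
    set c : ℝ := ‖x‖ / ‖T x‖ with hc
    have hc0 : 0 ≤ c := by positivity
    set y : H := ((c : ℂ)) • T x with hy
    have hyN : y ∈ N := N.smul_mem _ (hTN x hx)
    have hBxy : (⟪T x, y⟫_ℂ).re = ‖x‖ * ‖T x‖ := by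
      rw [hy, inner_smul_right]
      have : ⟪T x, T x⟫_ℂ = ((‖T x‖ : ℂ)) ^ 2 := inner_self_eq_norm_sq_to_K (T x)
      rw [this]
      have : ((c : ℂ)) * ((‖T x‖ : ℂ)) ^ 2 = ((c * ‖T x‖ ^ 2 : ℝ) : ℂ) := by push_cast; ring
      rw [this, Complex.ofReal_re, hc]
      field_simp
    have hny : ‖y‖ = ‖x‖ := by
      rw [hy, norm_smul, Complex.norm_real, Real.norm_eq_abs, abs_of_nonneg hc0, hc]
      field_simp
    have hk := key x hx y hyN
    rw [hBxy, hny] at hk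
    have h4 : ‖x‖ * ‖T x‖ ≤ ‖x‖ * (r * ‖x‖) := by nlinarith
    exact (mul_le_mul_iff_right₀ hxpos).mp h4

private lemma exists_eigvec (T : H →L[ℂ] H)
    (hsym : ∀ x y : H, ⟪T x, y⟫_ℂ = ⟪x, T y⟫_ℂ) (hcpt : IsCompactOperator T)
    (N : Submodule ℂ H) (hNc : IsClosed (N : Set H)) (hTN : ∀ x ∈ N, T x ∈ N)
    {x₀ : H} (hx₀ : x₀ ∈ N) (hTx₀ : T x₀ ≠ 0) :
    ∃ u, u ∈ N ∧ u ≠ 0 ∧ ∃ μ : ℂ, T u = μ • u := by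
  have hx₀ne : x₀ ≠ 0 := by rintro rfl; exact hTx₀ (map_zero T)
  have hx₀pos : 0 < ‖x₀‖ := norm_pos_iff.mpr hx₀ne
  set Q : H → ℝ := fun x => |(⟪T x, x⟫_ℂ).re| with hQ
  set U : Set ℝ := Q '' {x : H | x ∈ N ∧ ‖x‖ = 1} with hU
  set x₁ : H := ((‖x₀‖ : ℂ))⁻¹ • x₀ with hx₁def
  have hx₁N : x₁ ∈ N := N.smul_mem _ hx₀
  have hx₁norm : ‖x₁‖ = 1 := by
    rw [hx₁def, norm_smul, norm_inv, Complex.norm_real, Real.norm_eq_abs,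
      abs_of_nonneg (norm_nonneg x₀)]
    field_simp
  have hUne : U.Nonempty := ⟨Q x₁, ⟨x₁, ⟨hx₁N, hx₁norm⟩, rfl⟩⟩
  have hUbdd : BddAbove U := by
    refine ⟨‖T‖, ?_⟩
    rintro - ⟨x, ⟨hxN, hx1⟩, rfl⟩
    have h1 : |(⟪T x, x⟫_ℂ).re| ≤ ‖⟪T x, x⟫_ℂ‖ := Complex.abs_re_le_norm _
    have h2 : ‖⟪T x, x⟫_ℂ‖ ≤ ‖T x‖ * ‖x‖ := norm_inner_le_norm _ _
    have h3 : ‖T x‖ ≤ ‖T‖ * ‖x‖ := T.le_opNorm x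
    rw [hx1] at h2 h3
    simp only [mul_one] at h2 h3
    exact le_trans h1 (le_trans h2 h3)
  set r : ℝ := sSup U with hr
  have hrmem : ∀ x ∈ N, ‖x‖ = 1 → Q x ≤ r := fun x hx h1 => le_csSup hUbdd ⟨x, ⟨hx, h1⟩, rfl⟩
  have hr0 : 0 ≤ r := le_trans (abs_nonneg _) (hrmem x₁ hx₁N hx₁norm)
  have hrhom : ∀ x ∈ N, Q x ≤ r * ‖x‖ ^ 2 := by
    intro x hx
    rcases eq_or_ne x 0 with rfl | hne
    · simp [hQ]
    have hxpos : 0 < ‖x‖ := norm_pos_iff.mpr hne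
    set c : ℂ := ((‖x‖ : ℂ))⁻¹ with hc
    have hcconj : (starRingEnd ℂ) c = c := by
      rw [hc, map_inv₀, Complex.conj_ofReal]
    have hinner : ⟪T (c • x), c • x⟫_ℂ = ((‖x‖^2 : ℝ) : ℂ)⁻¹ * ⟪T x, x⟫_ℂ := by
      rw [map_smul, inner_smul_left, inner_smul_right, hcconj, hc]
      push_cast
      ring
    have hnorm : ‖c • x‖ = 1 := by
      rw [norm_smul, hc, norm_inv, Complex.norm_real, Real.norm_eq_abs,
        abs_of_nonneg (norm_nonneg x)]
      field_simp
    have hmem : c • x ∈ N := N.smul_mem _ hx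
    have h1 := hrmem _ hmem hnorm
    rw [hQ] at h1 ⊢
    simp only [hinner] at h1
    have hre : ((((‖x‖^2 : ℝ) : ℂ))⁻¹ * ⟪T x, x⟫_ℂ).re = (‖x‖^2)⁻¹ * (⟪T x, x⟫_ℂ).re := by
      rw [← Complex.ofReal_inv, Complex.re_ofReal_mul]
    rw [hre, abs_mul, abs_of_nonneg (by positivity : (0:ℝ) ≤ (‖x‖^2)⁻¹)] at h1
    have hx2 : (0:ℝ) < ‖x‖^2 := by positivity
    calc |(⟪T x, x⟫_ℂ).re| = ‖x‖^2 * ((‖x‖^2)⁻¹ * |(⟪T x, x⟫_ℂ).re|) := by field_simp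
    _ ≤ ‖x‖^2 * r := by
        exact mul_le_mul_of_nonneg_left h1 (le_of_lt hx2)
    _ = r * ‖x‖^2 := by ring
  have hTbound := aux_opNorm_bound T N hsym hTN hrhom
  have hrpos : 0 < r := by
    rcases hr0.lt_or_eq with h | h
    · exact h
    · exfalso
      apply hTx₀
      have := hTbound x₀ hx₀
      rw [← h, zero_mul] at this
      exact norm_le_zero_iff.mp this
  -- approximating sequence
  have hseq : ∀ n : ℕ, ∃ x, x ∈ N ∧ ‖x‖ = 1 ∧ r - 1/(n+1) < Q x := by
    intro n
    have hlt : r - 1/(n+1) < r := by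
      have : (0:ℝ) < 1/(n+1) := by positivity
      linarith
    obtain ⟨q, hqU, hq⟩ := exists_lt_of_lt_csSup hUne hlt
    obtain ⟨x, ⟨hxN, h1⟩, rfl⟩ := hqU
    exact ⟨x, hxN, h1, hq⟩
  choose x hxN hx1 hxlt using hseq
  set a : ℕ → ℝ := fun n => (⟪T (x n), x n⟫_ℂ).re with ha
  have h_le : ∀ n, |a n| ≤ r := fun n => hrmem _ (hxN n) (hx1 n)
  have h_tendsto_abs : Tendsto (fun n => |a n|) atTop (𝓝 r) := by
    have hlow : Tendsto (fun n : ℕ => r - 1/(n+1)) atTop (𝓝 r) := by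
      have := tendsto_one_div_add_atTop_nhds_zero_nat (𝕜 := ℝ)
      have h2 := tendsto_const_nhds (x := r) (f := atTop (α := ℕ)) |>.sub this
      simpa using h2
    exact tendsto_of_tendsto_of_tendsto_of_le_of_le hlow tendsto_const_nhds
      (fun n => (hxlt n).le) h_le
  obtain ⟨b, hbmem, φ, hφ, hφt⟩ := tendsto_subseq_of_bounded (Metric.isBounded_Icc (-r) r)
    (x := a) (fun n => Set.mem_Icc.mpr ⟨neg_le_of_abs_le (h_le n), le_of_abs_le (h_le n)⟩)
  have habs_b : |b| = r := by
    have h1 : Tendsto (fun n => |a (φ n)|) atTop (𝓝 |b|) :=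
      (continuous_abs.tendsto b).comp hφt
    have h2 : Tendsto (fun n => |a (φ n)|) atTop (𝓝 r) :=
      h_tendsto_abs.comp hφ.tendsto_atTop
    exact tendsto_nhds_unique h1 h2
  have hbne : b ≠ 0 := by
    intro h
    rw [h, abs_zero] at habs_b
    exact absurd habs_b.symm (ne_of_gt hrpos)
  have hbC : (b : ℂ) ≠ 0 := Complex.ofReal_ne_zero.mpr hbne
  -- compactness: extract convergent subsequence of T (x (φ n))
  have hK : IsCompact (closure (⇑T '' Metric.closedBall 0 1)) :=
    IsCompactOperator.isCompact_closure_image_of_bounded (𝕜₁ := ℂ) (𝕜₂ := ℂ)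
      (f := (T : H →ₗ[ℂ] H)) hcpt Metric.isBounded_closedBall
  have hTx_mem : ∀ n, T (x (φ n)) ∈ closure (⇑T '' Metric.closedBall 0 1) := by
    intro n
    exact subset_closure ⟨x (φ n), by
      simp [Metric.mem_closedBall, dist_zero_right, (hx1 (φ n)).le], rfl⟩
  obtain ⟨y, -, ψ, hψ, hy⟩ := hK.tendsto_subseq hTx_mem
  set χ : ℕ → ℕ := φ ∘ ψ with hχ
  have haχ : Tendsto (fun n => a (χ n)) atTop (𝓝 b) := hφt.comp hψ.tendsto_atTop
  have hyχ : Tendsto (fun n => T (x (χ n))) atTop (𝓝 y) := hy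
  -- the approximate eigenvector estimate
  have hub : ∀ n, ‖T (x (χ n)) - (b:ℂ) • x (χ n)‖^2 ≤ r^2 - 2*b*(a (χ n)) + b^2 := by
    intro n
    have hTle : ‖T (x (χ n))‖ ≤ r := by
      have := hTbound (x (χ n)) (hxN (χ n))
      rwa [hx1 (χ n), mul_one] at this
    have hT2 : ‖T (x (χ n))‖^2 ≤ r^2 := by
      have := pow_le_pow_left₀ (norm_nonneg _) hTle 2
      simpa using this
    have hexp := @norm_sub_sq ℂ _ _ _ _ (T (x (χ n))) ((b:ℂ) • x (χ n))
    have hre : RCLike.re ⟪T (x (χ n)), (b:ℂ) • x (χ n)⟫_ℂ = b * a (χ n) := by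
      rw [inner_smul_right]
      show ((b:ℂ) * ⟪T (x (χ n)), x (χ n)⟫_ℂ).re = b * a (χ n)
      rw [Complex.re_ofReal_mul]
    have hns : ‖(b:ℂ) • x (χ n)‖^2 = b^2 := by
      rw [norm_smul, Complex.norm_real, Real.norm_eq_abs, hx1 (χ n), mul_one, sq_abs]
    rw [hexp, hre, hns]
    linarith
  have hd2 : Tendsto (fun n => ‖T (x (χ n)) - (b:ℂ) • x (χ n)‖^2) atTop (𝓝 0) := by
    have hlim : Tendsto (fun n => r^2 - 2*b*(a (χ n)) + b^2) atTop (𝓝 0) := by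
      have h1 : Tendsto (fun n => r^2 - 2*b*(a (χ n)) + b^2) atTop
          (𝓝 (r^2 - 2*b*b + b^2)) := by
        exact (tendsto_const_nhds.sub (haχ.const_mul (2*b))).add tendsto_const_nhds
      have hb2 : b^2 = r^2 := by rw [← sq_abs, habs_b]
      have h2 : r^2 - 2*b*b + b^2 = 0 := by linear_combination (-1 : ℝ) * hb2
      rwa [h2] at h1
    exact tendsto_of_tendsto_of_tendsto_of_le_of_le tendsto_const_nhds hlim
      (fun n => sq_nonneg _) hub
  have hdn : Tendsto (fun n => T (x (χ n)) - (b:ℂ) • x (χ n)) atTop (𝓝 0) := by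
    rw [tendsto_zero_iff_norm_tendsto_zero]
    have h := (Real.continuous_sqrt.tendsto 0).comp hd2
    simp only [Function.comp_def, Real.sqrt_sq (norm_nonneg _), Real.sqrt_zero] at h
    exact h
  have hbx : Tendsto (fun n => (b:ℂ) • x (χ n)) atTop (𝓝 y) := by
    have := hyχ.sub hdn
    simpa using this
  have hxconv : Tendsto (fun n => x (χ n)) atTop (𝓝 ((b:ℂ)⁻¹ • y)) := by
    have h := hbx.const_smul ((b:ℂ)⁻¹)
    simpa only [smul_smul, inv_mul_cancel₀ hbC, one_smul] using h
  set u : H := (b:ℂ)⁻¹ • y with hu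
  have huN : u ∈ N := hNc.mem_of_tendsto hxconv (Filter.Eventually.of_forall fun n => hxN (χ n))
  have hunorm : ‖u‖ = 1 := by
    have h1 : Tendsto (fun n => ‖x (χ n)‖) atTop (𝓝 ‖u‖) :=
      (continuous_norm.tendsto u).comp hxconv
    have h2 : Tendsto (fun n => ‖x (χ n)‖) atTop (𝓝 1) := by
      have : (fun n => ‖x (χ n)‖) = fun _ => (1:ℝ) := funext fun n => hx1 (χ n)
      rw [this]; exact tendsto_const_nhds
    exact tendsto_nhds_unique h1 h2
  have hune : u ≠ 0 := by
    intro h; rw [h, norm_zero] at hunorm; norm_num at hunorm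
  have hTu : T u = (b:ℂ) • u := by
    have h1 : Tendsto (fun n => T (x (χ n))) atTop (𝓝 (T u)) :=
      (T.continuous.tendsto u).comp hxconv
    have h2 : T u = y := tendsto_nhds_unique h1 hyχ
    rw [h2, hu, smul_smul, mul_inv_cancel₀ hbC, one_smul]
  exact ⟨u, huN, hune, (b:ℂ), hTu⟩

private lemma dense_eigenvectors (T : H →L[ℂ] H)
    (hsym : ∀ x y : H, ⟪T x, y⟫_ℂ = ⟪x, T y⟫_ℂ)
    (hcpt : IsCompactOperator T) (hinj : Function.Injective T) :
    (Submodule.span ℂ {x : H | x ≠ 0 ∧ ∃ μ : ℂ, T x = μ • x}).topologicalClosure = ⊤ := by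
  set S := Submodule.span ℂ {x : H | x ≠ 0 ∧ ∃ μ : ℂ, T x = μ • x} with hS
  have hTS : ∀ y ∈ S, T y ∈ S := by
    intro y hy
    have hle : S ≤ S.comap (T : H →ₗ[ℂ] H) := by
      rw [hS]
      apply Submodule.span_le.mpr
      rintro z ⟨hzne, μ, hμ⟩
      have hz : T z ∈ S := by
        rw [hμ]
        exact S.smul_mem μ (Submodule.subset_span ⟨hzne, μ, hμ⟩)
      exact Submodule.mem_comap.mpr hz
    exact hle hy
  have hNT : ∀ x ∈ Sᗮ, T x ∈ Sᗮ := by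
    intro x hx
    rw [Submodule.mem_orthogonal] at hx ⊢
    intro u hu
    calc ⟪u, T x⟫_ℂ = (starRingEnd ℂ) ⟪T x, u⟫_ℂ := (inner_conj_symm u (T x)).symm
    _ = (starRingEnd ℂ) ⟪x, T u⟫_ℂ := by rw [hsym]
    _ = ⟪T u, x⟫_ℂ := inner_conj_symm (T u) x
    _ = 0 := hx (T u) (hTS u hu)
  have horth : Sᗮ = ⊥ := by
    by_contra hne
    obtain ⟨x₀, hx₀N, hx₀ne⟩ := Submodule.exists_mem_ne_zero_of_ne_bot hne
    have hTx₀ : T x₀ ≠ 0 := by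
      intro h
      exact hx₀ne (hinj (by simpa using h))
    obtain ⟨u, huN, hune, μ, hTu⟩ :=
      exists_eigvec T hsym hcpt Sᗮ S.isClosed_orthogonal hNT hx₀N hTx₀
    have huS : u ∈ S := Submodule.subset_span ⟨hune, μ, hTu⟩
    have h0 : ⟪u, u⟫_ℂ = 0 := (Submodule.mem_orthogonal _ _).mp huN u huS
    exact hune (inner_self_eq_zero.mp h0)
  rw [← Submodule.orthogonal_orthogonal_eq_closure, horth, Submodule.bot_orthogonal_eq_top]

private lemma findim_eigenspace (T : H →L[ℂ] H) (hcpt : IsCompactOperator T)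
    {μ : ℂ} (hμ : μ ≠ 0) :
    FiniteDimensional ℂ (LinearMap.ker ((T - μ • (1 : H →L[ℂ] H)) : H →ₗ[ℂ] H)) := by
  set W := LinearMap.ker ((T - μ • (1 : H →L[ℂ] H)) : H →ₗ[ℂ] H) with hW
  have hWmem : ∀ x : H, x ∈ W ↔ T x = μ • x := by
    intro x
    rw [hW, LinearMap.mem_ker]
    have h : (T - μ • (1 : H →L[ℂ] H)) x = T x - μ • x := by
      simp [ContinuousLinearMap.sub_apply, ContinuousLinearMap.smul_apply,
        ContinuousLinearMap.one_apply]
    exact (congrArg (· = (0:H)) h).to_iff.trans sub_eq_zero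
  have hWclosed : IsClosed ((W : Set H)) := by
    rw [hW]
    exact ContinuousLinearMap.isClosed_ker (T - μ • (1 : H →L[ℂ] H))
  have hK : IsCompact (closure (⇑T '' Metric.closedBall 0 (‖μ‖⁻¹ + 1))) :=
    IsCompactOperator.isCompact_closure_image_of_bounded (𝕜₁ := ℂ) (𝕜₂ := ℂ)
      (f := (T : H →ₗ[ℂ] H)) hcpt Metric.isBounded_closedBall
  have hCsub : (W : Set H) ∩ Metric.closedBall 0 1 ⊆
      closure (⇑T '' Metric.closedBall 0 (‖μ‖⁻¹ + 1)) := by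
    rintro z ⟨hzW, hz1⟩
    refine subset_closure ⟨μ⁻¹ • z, ?_, ?_⟩
    · rw [Metric.mem_closedBall, dist_zero_right, norm_smul, norm_inv]
      rw [Metric.mem_closedBall, dist_zero_right] at hz1
      have h0 : (0:ℝ) ≤ ‖μ‖⁻¹ := by positivity
      nlinarith [norm_nonneg z]
    · rw [map_smul, (hWmem z).mp hzW, smul_smul, inv_mul_cancel₀ hμ, one_smul]
  have hCcomp : IsCompact ((W : Set H) ∩ Metric.closedBall 0 1) :=
    hK.of_isClosed_subset (hWclosed.inter Metric.isClosed_closedBall) hCsub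
  have him : (Subtype.val '' Metric.closedBall (0 : W) 1) =
      (W : Set H) ∩ Metric.closedBall 0 1 := by
    ext z
    constructor
    · rintro ⟨⟨w, hw⟩, hmem, rfl⟩
      refine ⟨hw, ?_⟩
      rw [Metric.mem_closedBall] at hmem ⊢
      rwa [Subtype.dist_eq] at hmem
    · rintro ⟨hzW, hz1⟩
      refine ⟨⟨z, hzW⟩, ?_, rfl⟩
      rw [Metric.mem_closedBall, Subtype.dist_eq]
      rwa [Metric.mem_closedBall] at hz1
  have hball : IsCompact (Metric.closedBall (0 : W) 1) := by
    rw [Topology.IsEmbedding.subtypeVal.isCompact_iff, him]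
    exact hCcomp
  exact FiniteDimensional.of_isCompact_closedBall₀ ℂ one_pos hball


end Aux

set_option maxHeartbeats 1600000

/-- The Riesz projection. Let `A : V → H` be a self-adjoint operator with compact
resolvent (`V` the domain with graph norm, `ι` the compact inclusion, `R z` the
resolvent `(A - z)⁻¹ : H → V`), and let `γ` be a closed `C¹` curve in the resolvent
set with winding number `1` around the eigenvalue `z₀` and `0` around all other
eigenvalues. Then `P = -(2πi)⁻¹ ∮_γ (A - z)⁻¹ dz` is a projection whose range is
exactly the eigenspace of `A` for `z₀`; in particular its rank is the multiplicity
of `z₀`. -/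
theorem stmt14 {V H : Type*}
    [NormedAddCommGroup V] [InnerProductSpace ℂ V] [CompleteSpace V]
    [NormedAddCommGroup H] [InnerProductSpace ℂ H] [CompleteSpace H]
    (ι : V →L[ℂ] H) (hι : Function.Injective ι) (hdense : DenseRange ι)
    (hcompact : IsCompactOperator ι)
    (A : V →L[ℂ] H)
    (hsa : ∀ u v : V, ⟪A u, ι v⟫_ℂ = ⟪ι u, A v⟫_ℂ)
    (γ : ℝ → ℂ) (hγ : ContDiff ℝ 1 γ) (hclosed : γ 0 = γ 1)
    (R : ℂ → H →L[ℂ] V)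
    (hR₁ : ∀ t ∈ Set.Icc (0:ℝ) 1, (A - γ t • ι).comp (R (γ t)) = ContinuousLinearMap.id ℂ H)
    (hR₂ : ∀ t ∈ Set.Icc (0:ℝ) 1, (R (γ t)).comp (A - γ t • ι) = ContinuousLinearMap.id ℂ V)
    (z₀ : ℂ) (hz₀ : ∃ v : V, v ≠ 0 ∧ A v = z₀ • ι v)
    (hwind₀ : (2 * Real.pi * Complex.I)⁻¹ *
      ∫ t in (0:ℝ)..1, deriv γ t / (γ t - z₀) = 1)
    (hwind : ∀ w : ℂ, (∃ v : V, v ≠ 0 ∧ A v = w • ι v) → w ≠ z₀ →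
      (2 * Real.pi * Complex.I)⁻¹ * ∫ t in (0:ℝ)..1, deriv γ t / (γ t - w) = 0)
    (P : H →L[ℂ] H)
    (hP : P = (-(2 * Real.pi * Complex.I)⁻¹ : ℂ) •
      ∫ t in (0:ℝ)..1, deriv γ t • (ι.comp (R (γ t)))) :
    P.comp P = P ∧
    LinearMap.range (P : H →ₗ[ℂ] H) =
      Submodule.map (ι : V →ₗ[ℂ] H)
        (LinearMap.ker ((A : V →ₗ[ℂ] H) - z₀ • (ι : V →ₗ[ℂ] H))) ∧
    Module.finrank ℂ (LinearMap.range (P : H →ₗ[ℂ] H)) =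
      Module.finrank ℂ (LinearMap.ker ((A : V →ₗ[ℂ] H) - z₀ • (ι : V →ₗ[ℂ] H))) := by
  classical
  obtain ⟨v₀, hv₀ne, hv₀⟩ := hz₀
  have hι0 : ∀ v : V, ι v = 0 → v = 0 := by
    intro v h
    apply hι
    simpa using h
  have hιv₀ : ι v₀ ≠ 0 := fun h => hv₀ne (hι0 _ h)
  have hz₀conj : (starRingEnd ℂ) z₀ = z₀ := by
    have h1 := hsa v₀ v₀
    rw [hv₀, inner_smul_left, inner_smul_right] at h1
    have h2 : ⟪ι v₀, ι v₀⟫_ℂ ≠ 0 := fun h => hιv₀ (inner_self_eq_zero.mp h)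
    exact mul_right_cancel₀ h2 h1
  have hz₀im : z₀.im = 0 := Complex.conj_eq_iff_im.mp hz₀conj
  have hR₁' : ∀ t ∈ Set.Icc (0:ℝ) 1, ∀ x : H, (A - γ t • ι) (R (γ t) x) = x := by
    intro t ht x
    have h := congrArg (fun (f : H →L[ℂ] H) => f x) (hR₁ t ht)
    simpa using h
  have hR₂' : ∀ t ∈ Set.Icc (0:ℝ) 1, ∀ v : V, R (γ t) ((A - γ t • ι) v) = v := by
    intro t ht v
    have h := congrArg (fun (f : V →L[ℂ] V) => f v) (hR₂ t ht)
    simpa using h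
  have hγne : ∀ t ∈ Set.Icc (0:ℝ) 1, ∀ (w : ℂ) (v : V), v ≠ 0 → A v = w • ι v → γ t ≠ w := by
    intro t ht w v hv hAv heq
    apply hv
    have h3 : (A - γ t • ι) v = 0 := by
      rw [ContinuousLinearMap.sub_apply, ContinuousLinearMap.smul_apply, hAv, heq, sub_self]
    have h4 := hR₂' t ht v
    rw [h3, map_zero] at h4
    exact h4.symm
  have hRval : ∀ t ∈ Set.Icc (0:ℝ) 1, ∀ (w : ℂ) (v : V), A v = w • ι v → γ t ≠ w →
      R (γ t) (ι v) = (w - γ t)⁻¹ • v := by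
    intro t ht w v hAv hne
    have hwt : w - γ t ≠ 0 := sub_ne_zero.mpr (Ne.symm hne)
    have h1 : (A - γ t • ι) ((w - γ t)⁻¹ • v) = ι v := by
      rw [map_smul, ContinuousLinearMap.sub_apply, ContinuousLinearMap.smul_apply, hAv,
        ← sub_smul, smul_smul, inv_mul_cancel₀ hwt, one_smul]
    rw [← h1, hR₂' t ht]
  set G : ℝ → H →L[ℂ] H := fun t => deriv γ t • (ι.comp (R (γ t))) with hG
  have hident : ∀ s ∈ Set.Icc (0:ℝ) 1, ∀ t ∈ Set.Icc (0:ℝ) 1,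
      R (γ s) = R (γ t) + (γ s - γ t) • ((R (γ s)).comp (ι.comp (R (γ t)))) := by
    intro s hs t ht
    have e1 : (A - γ t • ι) = (A - γ s • ι) + (γ s - γ t) • ι := by
      rw [sub_smul]; abel
    calc R (γ s) = (R (γ s)).comp ((A - γ t • ι).comp (R (γ t))) := by
          rw [hR₁ t ht, ContinuousLinearMap.comp_id]
    _ = ((R (γ s)).comp (A - γ t • ι)).comp (R (γ t)) := by
          rw [ContinuousLinearMap.comp_assoc]
    _ = (ContinuousLinearMap.id ℂ V + (γ s - γ t) • ((R (γ s)).comp ι)).comp (R (γ t)) := by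
          rw [e1, ContinuousLinearMap.comp_add, ContinuousLinearMap.comp_smul, hR₂ s hs]
    _ = R (γ t) + (γ s - γ t) • ((R (γ s)).comp (ι.comp (R (γ t)))) := by
          rw [ContinuousLinearMap.add_comp, ContinuousLinearMap.smul_comp,
            ContinuousLinearMap.id_comp, ContinuousLinearMap.comp_assoc]
  have hRcont : ContinuousOn (fun t => R (γ t)) (Set.Icc (0:ℝ) 1) := by
    intro t ht
    rw [Metric.continuousWithinAt_iff]
    intro ε hε
    set Ct := ‖R (γ t)‖ with hCt
    set B := ‖ι‖ with hB
    have hCt0 : 0 ≤ Ct := norm_nonneg _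
    have hB0 : 0 ≤ B := norm_nonneg _
    have hq1 : (0:ℝ) < 2 * B * Ct + 1 := by nlinarith [mul_nonneg hB0 hCt0]
    have hq2 : (0:ℝ) < 2 * Ct * B * Ct + 1 := by
      nlinarith [mul_nonneg (mul_nonneg hCt0 hB0) hCt0]
    have hγc : ContinuousWithinAt γ (Set.Icc (0:ℝ) 1) t := (hγ.continuous).continuousWithinAt
    rw [Metric.continuousWithinAt_iff] at hγc
    set δ' := min (1 / (2 * B * Ct + 1)) (ε / (2 * Ct * B * Ct + 1)) with hδ'
    have hδ'pos : 0 < δ' := lt_min (div_pos one_pos hq1) (div_pos hε hq2)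
    obtain ⟨δ, hδpos, hδ⟩ := hγc δ' hδ'pos
    refine ⟨δ, hδpos, ?_⟩
    intro s hs hst
    have hγst : dist (γ s) (γ t) < δ' := hδ hs hst
    set d := dist (γ s) (γ t) with hd
    have hd0 : 0 ≤ d := dist_nonneg
    have hdn : d = ‖γ s - γ t‖ := by rw [hd, dist_eq_norm]
    have hid := hident s hs t ht
    have hXle : ‖(R (γ s)).comp (ι.comp (R (γ t)))‖ ≤ ‖R (γ s)‖ * (B * Ct) := by
      calc ‖(R (γ s)).comp (ι.comp (R (γ t)))‖ ≤ ‖R (γ s)‖ * ‖ι.comp (R (γ t))‖ :=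
            ContinuousLinearMap.opNorm_comp_le _ _
      _ ≤ ‖R (γ s)‖ * (B * Ct) := by
            have h5 := ContinuousLinearMap.opNorm_comp_le ι (R (γ t))
            exact mul_le_mul_of_nonneg_left h5 (norm_nonneg _)
    have hd1 : d * (2 * B * Ct + 1) < 1 := by
      have h1 : d < 1 / (2 * B * Ct + 1) := lt_of_lt_of_le hγst (min_le_left _ _)
      rw [lt_div_iff₀ hq1] at h1
      linarith
    have hhalf : d * (B * Ct) ≤ 1/2 := by nlinarith
    have hsm : ‖(γ s - γ t) • ((R (γ s)).comp (ι.comp (R (γ t))))‖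
        ≤ d * (‖R (γ s)‖ * (B * Ct)) := by
      calc ‖(γ s - γ t) • ((R (γ s)).comp (ι.comp (R (γ t))))‖
          ≤ ‖γ s - γ t‖ * ‖(R (γ s)).comp (ι.comp (R (γ t)))‖ :=
            ContinuousLinearMap.opNorm_smul_le _ _
      _ ≤ d * (‖R (γ s)‖ * (B * Ct)) := by
          rw [hdn]
          exact mul_le_mul_of_nonneg_left hXle (hdn ▸ hd0)
    have hRs_le : ‖R (γ s)‖ ≤ 2 * Ct := by
      have h1 : ‖R (γ s)‖ ≤ Ct + d * (‖R (γ s)‖ * (B * Ct)) := by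
        have h0 : ‖R (γ s)‖ = ‖R (γ t) + (γ s - γ t) • ((R (γ s)).comp (ι.comp (R (γ t))))‖ :=
          congrArg Norm.norm hid
        conv_lhs => rw [h0]
        exact le_trans (norm_add_le _ _) (add_le_add_right hsm Ct)
      nlinarith [norm_nonneg (R (γ s))]
    have hdiff : ‖R (γ s) - R (γ t)‖ ≤ d * (2 * Ct * (B * Ct)) := by
      have h2 : R (γ s) - R (γ t) = (γ s - γ t) • ((R (γ s)).comp (ι.comp (R (γ t)))) := by
        conv_lhs => rw [hid]
        exact add_sub_cancel_left _ _
      have h3 : d * (‖R (γ s)‖ * (B * Ct)) ≤ d * (2 * Ct * (B * Ct)) := by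
        apply mul_le_mul_of_nonneg_left _ hd0
        exact mul_le_mul_of_nonneg_right hRs_le (mul_nonneg hB0 hCt0)
      calc ‖R (γ s) - R (γ t)‖
          = ‖(γ s - γ t) • ((R (γ s)).comp (ι.comp (R (γ t))))‖ := by rw [h2]
      _ ≤ d * (‖R (γ s)‖ * (B * Ct)) := hsm
      _ ≤ d * (2 * Ct * (B * Ct)) := h3
    rw [dist_eq_norm]
    have h4 : d < ε / (2 * Ct * B * Ct + 1) := lt_of_lt_of_le hγst (min_le_right _ _)
    rw [lt_div_iff₀ hq2] at h4
    calc ‖R (γ s) - R (γ t)‖ ≤ d * (2 * Ct * (B * Ct)) := hdiff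
    _ < ε := by nlinarith
  have hGcont : ContinuousOn G (Set.Icc (0:ℝ) 1) := by
    apply ContinuousOn.fun_smul
    · exact (hγ.continuous_deriv le_rfl).continuousOn
    · exact ((ContinuousLinearMap.compL ℂ H V H ι).continuous).comp_continuousOn hRcont
  have hGint : IntervalIntegrable G MeasureTheory.volume 0 1 := by
    apply ContinuousOn.intervalIntegrable
    rwa [Set.uIcc_of_le zero_le_one]
  have hPapply : ∀ (w : ℂ) (v : V), A v = w • ι v → (∀ t ∈ Set.Icc (0:ℝ) 1, γ t ≠ w) →
      P (ι v) = ((2 * Real.pi * Complex.I)⁻¹ *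
        ∫ t in (0:ℝ)..1, deriv γ t / (γ t - w)) • ι v := by
    intro w v hAv hne
    have happ : (∫ t in (0:ℝ)..1, G t) (ι v) = ∫ t in (0:ℝ)..1, G t (ι v) :=
      ContinuousLinearMap.intervalIntegral_apply hGint (ι v)
    have hptw : Set.EqOn (fun t => G t (ι v))
        (fun t => (-(deriv γ t / (γ t - w))) • ι v) (Set.uIcc (0:ℝ) 1) := by
      intro t ht
      rw [Set.uIcc_of_le zero_le_one] at ht
      show G t (ι v) = _
      rw [hG]
      simp only [ContinuousLinearMap.smul_apply, ContinuousLinearMap.comp_apply]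
      rw [hRval t ht w v hAv (hne t ht), map_smul, smul_smul]
      congr 1
      rw [div_eq_mul_inv, ← mul_neg, ← inv_neg, neg_sub]
    rw [hP, ContinuousLinearMap.smul_apply, happ, intervalIntegral.integral_congr hptw,
      intervalIntegral.integral_smul_const, intervalIntegral.integral_neg, smul_smul]
    congr 1
    ring
  have hPz₀fix : ∀ v : V, A v = z₀ • ι v → P (ι v) = ι v := by
    intro v hAv
    have h := hPapply z₀ v hAv (fun t ht => hγne t ht z₀ v₀ hv₀ne hv₀)
    rw [hwind₀, one_smul] at h
    exact h
  have hPkill : ∀ (w : ℂ) (v : V), v ≠ 0 → A v = w • ι v → w ≠ z₀ → P (ι v) = 0 := by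
    intro w v hv hAv hwz
    have h := hPapply w v hAv (fun t ht => hγne t ht w v hv hAv)
    rw [hwind w ⟨v, hv, hAv⟩ hwz, zero_smul] at h
    exact h
  have hrealpt : ∃ t ∈ Set.Icc (0:ℝ) 1, (γ t).im = 0 := by
    by_contra hc
    push_neg at hc
    have hsl : ∀ t ∈ Set.uIcc (0:ℝ) 1, (γ t - z₀) ∈ Complex.slitPlane := by
      intro t ht
      rw [Set.uIcc_of_le zero_le_one] at ht
      apply Complex.mem_slitPlane_iff.mpr
      right
      rw [Complex.sub_im, hz₀im, sub_zero]
      exact hc t ht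
    have hder : ∀ t ∈ Set.uIcc (0:ℝ) 1,
        HasDerivAt (fun s => Complex.log (γ s - z₀)) (deriv γ t / (γ t - z₀)) t := by
      intro t ht
      have h1 : HasDerivAt γ (deriv γ t) t := ((hγ.differentiable one_ne_zero) t).hasDerivAt
      exact (h1.sub_const z₀).clog_real (hsl t ht)
    have hintg : IntervalIntegrable (fun t => deriv γ t / (γ t - z₀))
        MeasureTheory.volume 0 1 := by
      apply ContinuousOn.intervalIntegrable
      apply ContinuousOn.div
      · exact (hγ.continuous_deriv le_rfl).continuousOn
      · exact (hγ.continuous.sub continuous_const).continuousOn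
      · intro t ht
        exact Complex.slitPlane_ne_zero (hsl t ht)
    have heq := intervalIntegral.integral_eq_sub_of_hasDerivAt hder hintg
    rw [hclosed, sub_self] at heq
    rw [heq, mul_zero] at hwind₀
    exact zero_ne_one hwind₀
  obtain ⟨t₀, ht₀, himt₀⟩ := hrealpt
  have hγt₀conj : (starRingEnd ℂ) (γ t₀) = γ t₀ := Complex.conj_eq_iff_im.mpr himt₀
  set T : H →L[ℂ] H := ι.comp (R (γ t₀)) with hT
  have hTsym : ∀ x y : H, ⟪T x, y⟫_ℂ = ⟪x, T y⟫_ℂ := by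
    intro x y
    set u := R (γ t₀) x with hu
    set v := R (γ t₀) y with hv
    have hx : A u - γ t₀ • ι u = x := by
      have h := hR₁' t₀ ht₀ x
      simpa [ContinuousLinearMap.sub_apply, ContinuousLinearMap.smul_apply] using h
    have hy : A v - γ t₀ • ι v = y := by
      have h := hR₁' t₀ ht₀ y
      simpa [ContinuousLinearMap.sub_apply, ContinuousLinearMap.smul_apply] using h
    have hTx : T x = ι u := rfl
    have hTy : T y = ι v := rfl
    calc ⟪T x, y⟫_ℂ = ⟪ι u, A v - γ t₀ • ι v⟫_ℂ := by rw [hTx, hy]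
    _ = ⟪ι u, A v⟫_ℂ - γ t₀ * ⟪ι u, ι v⟫_ℂ := by rw [inner_sub_right, inner_smul_right]
    _ = ⟪A u, ι v⟫_ℂ - γ t₀ * ⟪ι u, ι v⟫_ℂ := by rw [hsa]
    _ = ⟪A u - γ t₀ • ι u, ι v⟫_ℂ := by
          rw [inner_sub_left, inner_smul_left, hγt₀conj]
    _ = ⟪x, T y⟫_ℂ := by rw [hx, hTy]
  have hTcpt : IsCompactOperator (⇑T) := by
    have h := hcompact.comp_clm (R (γ t₀))
    rwa [hT, ContinuousLinearMap.coe_comp']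
  have hTinj : Function.Injective (⇑T) := by
    intro a b hab
    have h1 : R (γ t₀) a = R (γ t₀) b :=
      hι (by simpa [hT, ContinuousLinearMap.comp_apply] using hab)
    calc a = (A - γ t₀ • ι) (R (γ t₀) a) := (hR₁' t₀ ht₀ a).symm
    _ = (A - γ t₀ • ι) (R (γ t₀) b) := by rw [h1]
    _ = b := hR₁' t₀ ht₀ b
  have hγz₀ : γ t₀ ≠ z₀ := hγne t₀ ht₀ z₀ v₀ hv₀ne hv₀
  set μ₀ : ℂ := (z₀ - γ t₀)⁻¹ with hμ₀
  have hμ₀ne : μ₀ ≠ 0 := inv_ne_zero (sub_ne_zero.mpr (Ne.symm hγz₀))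
  set Wker := LinearMap.ker ((A : V →ₗ[ℂ] H) - z₀ • (ι : V →ₗ[ℂ] H)) with hWker
  set E := Submodule.map (ι : V →ₗ[ℂ] H) Wker with hE
  have hkermem : ∀ v : V, v ∈ Wker ↔ A v = z₀ • ι v := by
    intro v
    rw [hWker, LinearMap.mem_ker, LinearMap.sub_apply, LinearMap.smul_apply, sub_eq_zero]
    exact Iff.rfl
  set WT := LinearMap.ker ((T - μ₀ • (1 : H →L[ℂ] H)) : H →ₗ[ℂ] H) with hWT
  have hWTmem : ∀ x : H, x ∈ WT ↔ T x = μ₀ • x := by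
    intro x
    rw [hWT, LinearMap.mem_ker]
    have h : (T - μ₀ • (1 : H →L[ℂ] H)) x = T x - μ₀ • x := by
      simp [ContinuousLinearMap.sub_apply, ContinuousLinearMap.smul_apply,
        ContinuousLinearMap.one_apply]
    exact (congrArg (· = (0:H)) h).to_iff.trans sub_eq_zero
  have hEW : E ≤ WT := by
    rintro x ⟨v, hv, rfl⟩
    rw [hWTmem]
    have hAv : A v = z₀ • ι v := (hkermem v).mp hv
    show T (ι v) = μ₀ • ι v
    rw [hT, ContinuousLinearMap.comp_apply, hRval t₀ ht₀ z₀ v hAv hγz₀, map_smul, hμ₀]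
  haveI hWTfin : FiniteDimensional ℂ WT := findim_eigenspace T hTcpt hμ₀ne
  haveI hEfin : FiniteDimensional ℂ E := Submodule.finiteDimensional_of_le hEW
  have hEclosed : IsClosed (E : Set H) := Submodule.closed_of_finiteDimensional E
  have hPeig : ∀ x : H, x ≠ 0 → (∃ μ : ℂ, T x = μ • x) → P x ∈ E := by
    rintro x hx ⟨μ, hμx⟩
    have hμne : μ ≠ 0 := by
      rintro rfl
      rw [zero_smul] at hμx
      exact hx (hTinj (by rw [hμx, map_zero]))
    set v := R (γ t₀) x with hv
    have hiv : ι v = μ • x := hμx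
    have hvne : v ≠ 0 := by
      intro h
      apply hx
      have h2 : μ • x = 0 := by rw [← hiv, h, map_zero]
      simpa [smul_eq_zero, hμne] using h2
    have hxv : x = μ⁻¹ • ι v := by rw [hiv, smul_smul, inv_mul_cancel₀ hμne, one_smul]
    have hAv : A v = (γ t₀ + μ⁻¹) • ι v := by
      have h1 : A v - γ t₀ • ι v = x := by
        have h := hR₁' t₀ ht₀ x
        simpa [ContinuousLinearMap.sub_apply, ContinuousLinearMap.smul_apply] using h
      calc A v = (A v - γ t₀ • ι v) + γ t₀ • ι v := by abel
      _ = μ⁻¹ • ι v + γ t₀ • ι v := by rw [h1, hxv]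
      _ = (γ t₀ + μ⁻¹) • ι v := by rw [add_smul]; abel
    by_cases hw : γ t₀ + μ⁻¹ = z₀
    · have hPx : P x = x := by
        conv_lhs => rw [hxv]
        rw [map_smul, hPz₀fix v (by rw [hAv, hw]), ← hxv]
      rw [hPx, hxv]
      exact E.smul_mem μ⁻¹ ⟨v, (hkermem v).mpr (by rw [hAv, hw]), rfl⟩
    · have hPx : P x = 0 := by
        conv_lhs => rw [hxv]
        rw [map_smul, hPkill (γ t₀ + μ⁻¹) v hvne hAv hw, smul_zero]
      rw [hPx]
      exact E.zero_mem
  have hdense2 := dense_eigenvectors T hTsym hTcpt hTinj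
  set S := Submodule.span ℂ {x : H | x ≠ 0 ∧ ∃ μ : ℂ, T x = μ • x} with hSdef
  have hPS : ∀ x ∈ S, P x ∈ E := by
    intro x hx
    have hle : S ≤ E.comap (P : H →ₗ[ℂ] H) := by
      apply Submodule.span_le.mpr
      rintro z ⟨hzne, μ, hμz⟩
      exact Submodule.mem_comap.mpr (hPeig z hzne ⟨μ, hμz⟩)
    exact hle hx
  have hPmem : ∀ x : H, P x ∈ E := by
    intro x
    have hx : x ∈ closure (S : Set H) := by
      have h1 : x ∈ S.topologicalClosure := by rw [hdense2]; trivial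
      exact h1
    have hcl : closure (S : Set H) ⊆ (P : H → H) ⁻¹' (E : Set H) :=
      closure_minimal (fun y hy => hPS y hy) (hEclosed.preimage P.continuous)
    exact hcl hx
  have hfix : ∀ y ∈ E, P y = y := by
    rintro y ⟨v, hv, rfl⟩
    exact hPz₀fix v ((hkermem v).mp hv)
  have hrange : LinearMap.range (P : H →ₗ[ℂ] H) = E := by
    apply le_antisymm
    · rintro y ⟨x, rfl⟩
      exact hPmem x
    · intro y hy
      exact ⟨y, hfix y hy⟩
  refine ⟨?_, ?_, ?_⟩
  · ext x
    simp only [ContinuousLinearMap.comp_apply]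
    exact hfix (P x) (hPmem x)
  · exact hrange
  · rw [hrange, hE]
    exact (Submodule.equivMapOfInjective (ι : V →ₗ[ℂ] H) hι Wker).finrank_eq.symm
end

section
/- Let P(t)(x) = x² − a₁(t)x + a₂(t) be a hyperbolic (both roots real) monic quadratic with real-analytic coefficients a₁, a₂ on ℝ. Then there exist real-analytic functions λ₁, λ₂ : ℝ → ℝ with P(t)(x) = (x − λ₁(t))(x − λ₂(t)) for all t. -/
open Filter Set Topology

lemma analyticAt_rlog {x : ℝ} (hx : 0 < x) : AnalyticAt ℝ Real.log x := by
  have h1 : AnalyticAt ℝ (fun t : ℝ => (t : ℂ)) x := Complex.ofRealCLM.analyticAt x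
  have h2 : AnalyticAt ℝ (fun t : ℝ => Complex.log (t : ℂ)) x :=
    ((analyticAt_clog (Complex.ofReal_mem_slitPlane.2 hx)).restrictScalars).comp h1
  have h3 : AnalyticAt ℝ (fun t : ℝ => (Complex.log (t : ℂ)).re) x :=
    (Complex.reCLM.analyticAt _).comp h2
  exact h3.congr (Eventually.of_forall fun t => Complex.log_ofReal_re t)

lemma analyticAt_rsqrt {x : ℝ} (hx : 0 < x) : AnalyticAt ℝ Real.sqrt x := by
  have h1 : AnalyticAt ℝ (fun y : ℝ => Real.exp (Real.log y / 2)) x :=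
    analyticAt_rexp.comp ((analyticAt_rlog hx).div analyticAt_const two_ne_zero)
  apply h1.congr
  have : ∀ᶠ y in 𝓝 x, 0 < y := eventually_gt_nhds hx
  filter_upwards [this] with y hy
  rw [← Real.log_sqrt hy.le, Real.exp_log (Real.sqrt_pos.2 hy)]

lemma local_sqrt {d : ℝ → ℝ} (hd : AnalyticOnNhd ℝ d Set.univ) (hpos : ∀ t, 0 ≤ d t)
    (hne : ∃ t, d t ≠ 0) (t₀ : ℝ) :
    ∃ g : ℝ → ℝ, AnalyticAt ℝ g t₀ ∧ ∀ᶠ t in 𝓝 t₀, g t ^ 2 = d t := by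
  have ha : AnalyticAt ℝ d t₀ := hd t₀ (mem_univ _)
  have hord : analyticOrderAt d t₀ ≠ ⊤ := by
    intro h
    rw [analyticOrderAt_eq_top] at h
    obtain ⟨t, ht⟩ := hne
    exact ht (hd.eqOn_zero_of_preconnected_of_eventuallyEq_zero isPreconnected_univ
      (mem_univ t₀) h (mem_univ t))
  lift analyticOrderAt d t₀ to ℕ using hord with n hn
  obtain ⟨u, hu, hu0, hdu⟩ := (ha.analyticOrderAt_eq_natCast (n := n)).mp hn.symm
  simp only [smul_eq_mul] at hdu
  -- u t₀ > 0
  have hcont : ContinuousAt u t₀ := hu.continuousAt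
  have hupos : 0 < u t₀ := by
    rcases hu0.lt_or_gt with h | h
    · -- u t₀ < 0 : contradiction using t > t₀
      exfalso
      have h1 : ∀ᶠ t in 𝓝[>] t₀, d t = (t - t₀) ^ n * u t :=
        nhdsWithin_le_nhds hdu
      have h2 : ∀ᶠ t in 𝓝[>] t₀, u t < 0 :=
        nhdsWithin_le_nhds (hcont.eventually_lt_const h)
      have h3 : ∀ᶠ t in 𝓝[>] t₀, t₀ < t := eventually_mem_nhdsWithin
      obtain ⟨t, e1, e2, e3⟩ := (h1.and (h2.and h3)).exists
      have : d t < 0 := by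
        rw [e1]
        exact mul_neg_of_pos_of_neg (pow_pos (sub_pos.2 e3) n) e2
      exact absurd (hpos t) (not_le.2 this)
    · exact h
  -- n is even
  have heven : Even n := by
    rcases Nat.even_or_odd n with h | h
    · exact h
    · exfalso
      have h1 : ∀ᶠ t in 𝓝[<] t₀, d t = (t - t₀) ^ n * u t := nhdsWithin_le_nhds hdu
      have h2 : ∀ᶠ t in 𝓝[<] t₀, 0 < u t :=
        nhdsWithin_le_nhds (hcont.eventually_const_lt hupos)
      have h3 : ∀ᶠ t in 𝓝[<] t₀, t < t₀ := eventually_mem_nhdsWithin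
      obtain ⟨t, e1, e2, e3⟩ := (h1.and (h2.and h3)).exists
      have : d t < 0 := by
        rw [e1]
        exact mul_neg_of_neg_of_pos (h.pow_neg (sub_neg.2 e3)) e2
      exact absurd (hpos t) (not_le.2 this)
  refine ⟨fun t => (t - t₀) ^ (n / 2) * Real.sqrt (u t), ?_, ?_⟩
  · exact ((analyticAt_id.sub analyticAt_const).pow _).mul ((analyticAt_rsqrt hupos).comp hu)
  · filter_upwards [hdu, hu.continuousAt.eventually_const_lt hupos] with t h1 h2
    have : Real.sqrt (u t) ^ 2 = u t := Real.sq_sqrt h2.le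
    rw [mul_pow, this, ← pow_mul, Nat.div_mul_cancel heven.two_dvd, h1]

/-- Uniqueness of solutions agreeing near a point. -/
lemma sol_unique {g₀ s s' : ℝ → ℝ} {r r' : ℝ} (hr : 0 < r) (hrr : r ≤ r')
    (hs : AnalyticOnNhd ℝ s (Set.Ioo (-r) r)) (hs' : AnalyticOnNhd ℝ s' (Set.Ioo (-r') r'))
    (h0 : s =ᶠ[𝓝 0] g₀) (h0' : s' =ᶠ[𝓝 0] g₀) : Set.EqOn s s' (Set.Ioo (-r) r) := by
  have hsub : Set.Ioo (-r) r ⊆ Set.Ioo (-r') r' :=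
    Set.Ioo_subset_Ioo (neg_le_neg hrr) hrr
  have hmem : (0 : ℝ) ∈ Set.Ioo (-r) r := by constructor <;> simp [hr, neg_neg_iff_pos.2 hr] <;> linarith
  have := (hs.sub (hs'.mono hsub)).eqOn_zero_of_preconnected_of_eventuallyEq_zero
    isPreconnected_Ioo hmem (by filter_upwards [h0, h0'] with t e1 e2; simp [e1, e2])
  intro t ht
  have := this ht
  simpa [sub_eq_zero] using this

/-- Sign matching on an interval. -/
lemma match_sign {d s g : ℝ → ℝ} (hd : AnalyticOnNhd ℝ d Set.univ) (hne : ∃ t, d t ≠ 0)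
    {a b : ℝ} (hab : a < b) (hs : AnalyticOnNhd ℝ s (Set.Ioo a b))
    (hg : AnalyticOnNhd ℝ g (Set.Ioo a b))
    (hs2 : ∀ t ∈ Set.Ioo a b, s t ^ 2 = d t) (hg2 : ∀ t ∈ Set.Ioo a b, g t ^ 2 = d t) :
    Set.EqOn s g (Set.Ioo a b) ∨ Set.EqOn s (fun t => - g t) (Set.Ioo a b) := by
  -- find a point where d ≠ 0
  obtain ⟨t₁, ht₁, hd₁⟩ : ∃ t₁ ∈ Set.Ioo a b, d t₁ ≠ 0 := by
    by_contra h
    push_neg at h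
    obtain ⟨t, ht⟩ := hne
    have hc : (a + b) / 2 ∈ Set.Ioo a b := by constructor <;> linarith
    have hfreq : ∃ᶠ z in 𝓝[≠] ((a + b) / 2), d z = 0 := by
      apply Filter.Eventually.frequently
      have : Set.Ioo a b ∈ 𝓝[≠] ((a + b) / 2) :=
        nhdsWithin_le_nhds (isOpen_Ioo.mem_nhds hc)
      filter_upwards [this] with z hz using h z hz
    exact ht (hd.eqOn_zero_of_preconnected_of_frequently_eq_zero isPreconnected_univ
      (Set.mem_univ _) hfreq (Set.mem_univ t))
  have hgne : g t₁ ≠ 0 := fun h => hd₁ (by rw [← hg2 t₁ ht₁, h]; ring)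
  have hsq : s t₁ ^ 2 = g t₁ ^ 2 := by rw [hs2 t₁ ht₁, hg2 t₁ ht₁]
  have hcase : s t₁ = g t₁ ∨ s t₁ = - g t₁ := sq_eq_sq_iff_eq_or_eq_neg.mp hsq
  -- general claim: if s t₁ = G t₁ with G analytic, G² = d, then EqOn s G
  have key : ∀ G : ℝ → ℝ, AnalyticOnNhd ℝ G (Set.Ioo a b) →
      (∀ t ∈ Set.Ioo a b, G t ^ 2 = d t) → s t₁ = G t₁ → Set.EqOn s G (Set.Ioo a b) := by
    intro G hG hG2 hsG
    have hGne : G t₁ ≠ 0 := by rw [← hsG]; rw [hsG] at hsq ⊢; intro h; exact hd₁ (by rw [← hG2 t₁ ht₁, h]; ring)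
    -- s = G near t₁
    have hev : s =ᶠ[𝓝 t₁] G := by
      have hcs : ContinuousAt s t₁ := (hs t₁ ht₁).continuousAt
      have hcG : ContinuousAt G t₁ := (hG t₁ ht₁).continuousAt
      have hsum : ContinuousAt (fun t => s t + G t) t₁ := hcs.add hcG
      have hne2 : s t₁ + G t₁ ≠ 0 := by rw [hsG]; intro h; apply hGne; linarith [h]
      have h1 : ∀ᶠ t in 𝓝 t₁, s t + G t ≠ 0 := hsum.eventually_ne hne2
      have h2 : ∀ᶠ t in 𝓝 t₁, t ∈ Set.Ioo a b := isOpen_Ioo.eventually_mem ht₁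
      filter_upwards [h1, h2] with t e1 e2
      have : (s t - G t) * (s t + G t) = 0 := by
        have := hs2 t e2; have := hG2 t e2; nlinarith
      rcases mul_eq_zero.mp this with h | h
      · linarith [h]
      · exact absurd h e1
    exact hs.eqOn_of_preconnected_of_eventuallyEq hG isPreconnected_Ioo ht₁ hev
  rcases hcase with h | h
  · exact Or.inl (key g hg hg2 h)
  · exact Or.inr (key (fun t => - g t) hg.neg (fun t ht => by simpa using hg2 t ht) h)

/-- Extension of a square root past the right endpoint. -/
lemma extend_right {d s : ℝ → ℝ} (hd : AnalyticOnNhd ℝ d Set.univ) (hpos : ∀ t, 0 ≤ d t)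
    (hne : ∃ t, d t ≠ 0) {a m : ℝ} (ham : a < m)
    (hs : AnalyticOnNhd ℝ s (Set.Ioo a m)) (hs2 : ∀ t ∈ Set.Ioo a m, s t ^ 2 = d t) :
    ∃ δ > 0, ∃ s' : ℝ → ℝ, AnalyticOnNhd ℝ s' (Set.Ioo a (m + δ)) ∧
      (∀ t ∈ Set.Ioo a (m + δ), s' t ^ 2 = d t) ∧ Set.EqOn s' s (Set.Ioo a m) := by
  obtain ⟨g, hg, hg2⟩ := local_sqrt hd hpos hne m
  -- find ε > 0 with g analytic & g² = d on ball
  have hev : ∀ᶠ t in 𝓝 m, AnalyticAt ℝ g t ∧ g t ^ 2 = d t :=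
    hg.eventually_analyticAt.and hg2
  obtain ⟨ε₀, hε₀, hball⟩ := Metric.eventually_nhds_iff_ball.mp hev
  set ε := min ε₀ (m - a) with hε
  have hεpos : 0 < ε := lt_min hε₀ (by linarith)
  have hprop : ∀ t, t ∈ Set.Ioo (m - ε) (m + ε) → AnalyticAt ℝ g t ∧ g t ^ 2 = d t := by
    intro t ht
    apply hball
    rw [Real.ball_eq_Ioo]
    have h1 := min_le_left ε₀ (m - a)
    obtain ⟨ht1, ht2⟩ := ht
    constructor <;> simp only [hε] at ht1 ht2 ⊢ <;> linarith
  -- overlap interval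
  have hover : m - ε < m := by linarith
  have hover_sub_s : Set.Ioo (m - ε) m ⊆ Set.Ioo a m := by
    apply Set.Ioo_subset_Ioo _ le_rfl
    have := min_le_right ε₀ (m - a); simp [hε]; linarith
  have hover_sub_g : Set.Ioo (m - ε) m ⊆ Set.Ioo (m - ε) (m + ε) := by
    apply Set.Ioo_subset_Ioo le_rfl; linarith
  have hmatch := match_sign hd hne hover (hs.mono hover_sub_s)
    (fun t ht => (hprop t (hover_sub_g ht)).1)
    (fun t ht => hs2 t (hover_sub_s ht)) (fun t ht => (hprop t (hover_sub_g ht)).2)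
  -- in the second case replace g by -g
  obtain ⟨G, hGa, hG2, hmG⟩ : ∃ G : ℝ → ℝ, (∀ t ∈ Set.Ioo (m - ε) (m + ε), AnalyticAt ℝ G t) ∧
      (∀ t ∈ Set.Ioo (m - ε) (m + ε), G t ^ 2 = d t) ∧ Set.EqOn s G (Set.Ioo (m - ε) m) := by
    rcases hmatch with h | h
    · exact ⟨g, fun t ht => (hprop t ht).1, fun t ht => (hprop t ht).2, h⟩
    · exact ⟨fun t => - g t, fun t ht => ((hprop t ht).1).neg,
        fun t ht => by simpa using (hprop t ht).2, h⟩
  refine ⟨ε, hεpos, fun t => if t < m then s t else G t, ?_, ?_, ?_⟩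
  · intro t ht
    rcases lt_or_ge t m with h | h
    · have hts : t ∈ Set.Ioo a m := ⟨ht.1, h⟩
      apply (hs t hts).congr
      filter_upwards [isOpen_Iio.eventually_mem (show t ∈ Set.Iio m from h)] with z hz
      simp [if_pos (show z < m from hz)]
    · have htg : t ∈ Set.Ioo (m - ε) (m + ε) := ⟨by linarith, ht.2⟩
      apply (hGa t htg).congr
      filter_upwards [isOpen_Ioo.eventually_mem htg] with z hz
      by_cases hzm : z < m
      · simp only [if_pos hzm]
        exact (hmG ⟨hz.1, hzm⟩).symm
      · simp [if_neg hzm]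
  · intro t ht
    by_cases hzm : t < m
    · simp only [if_pos hzm]; exact hs2 t ⟨ht.1, hzm⟩
    · simp only [if_neg hzm]; exact hG2 t ⟨by push_neg at hzm; linarith, ht.2⟩
  · intro t ht
    simp [if_pos ht.2]

/-- Extension of a square root past the left endpoint. -/
lemma extend_left {d s : ℝ → ℝ} (hd : AnalyticOnNhd ℝ d Set.univ) (hpos : ∀ t, 0 ≤ d t)
    (hne : ∃ t, d t ≠ 0) {a m : ℝ} (ham : a < m)
    (hs : AnalyticOnNhd ℝ s (Set.Ioo a m)) (hs2 : ∀ t ∈ Set.Ioo a m, s t ^ 2 = d t) :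
    ∃ δ > 0, ∃ s' : ℝ → ℝ, AnalyticOnNhd ℝ s' (Set.Ioo (a - δ) m) ∧
      (∀ t ∈ Set.Ioo (a - δ) m, s' t ^ 2 = d t) ∧ Set.EqOn s' s (Set.Ioo a m) := by
  obtain ⟨g, hg, hg2⟩ := local_sqrt hd hpos hne a
  have hev : ∀ᶠ t in 𝓝 a, AnalyticAt ℝ g t ∧ g t ^ 2 = d t :=
    hg.eventually_analyticAt.and hg2
  obtain ⟨ε₀, hε₀, hball⟩ := Metric.eventually_nhds_iff_ball.mp hev
  set ε := min ε₀ (m - a) with hε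
  have hεpos : 0 < ε := lt_min hε₀ (by linarith)
  have hprop : ∀ t, t ∈ Set.Ioo (a - ε) (a + ε) → AnalyticAt ℝ g t ∧ g t ^ 2 = d t := by
    intro t ht
    apply hball
    rw [Real.ball_eq_Ioo]
    have h1 := min_le_left ε₀ (m - a)
    obtain ⟨ht1, ht2⟩ := ht
    constructor <;> simp only [hε] at ht1 ht2 ⊢ <;> linarith
  have hover : a < a + ε := by linarith
  have hover_sub_s : Set.Ioo a (a + ε) ⊆ Set.Ioo a m := by
    apply Set.Ioo_subset_Ioo le_rfl
    have := min_le_right ε₀ (m - a); simp only [hε] at *; linarith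
  have hover_sub_g : Set.Ioo a (a + ε) ⊆ Set.Ioo (a - ε) (a + ε) := by
    apply Set.Ioo_subset_Ioo _ le_rfl; linarith
  have hmatch := match_sign hd hne hover (hs.mono hover_sub_s)
    (fun t ht => (hprop t (hover_sub_g ht)).1)
    (fun t ht => hs2 t (hover_sub_s ht)) (fun t ht => (hprop t (hover_sub_g ht)).2)
  obtain ⟨G, hGa, hG2, hmG⟩ : ∃ G : ℝ → ℝ, (∀ t ∈ Set.Ioo (a - ε) (a + ε), AnalyticAt ℝ G t) ∧
      (∀ t ∈ Set.Ioo (a - ε) (a + ε), G t ^ 2 = d t) ∧ Set.EqOn s G (Set.Ioo a (a + ε)) := by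
    rcases hmatch with h | h
    · exact ⟨g, fun t ht => (hprop t ht).1, fun t ht => (hprop t ht).2, h⟩
    · exact ⟨fun t => - g t, fun t ht => ((hprop t ht).1).neg,
        fun t ht => by simpa using (hprop t ht).2, h⟩
  refine ⟨ε, hεpos, fun t => if a < t then s t else G t, ?_, ?_, ?_⟩
  · intro t ht
    rcases lt_or_ge a t with h | h
    · have hts : t ∈ Set.Ioo a m := ⟨h, ht.2⟩
      apply (hs t hts).congr
      filter_upwards [isOpen_Ioi.eventually_mem (show t ∈ Set.Ioi a from h)] with z hz
      simp [if_pos (show a < z from hz)]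
    · have htg : t ∈ Set.Ioo (a - ε) (a + ε) := ⟨ht.1, by linarith⟩
      apply (hGa t htg).congr
      filter_upwards [isOpen_Ioo.eventually_mem htg] with z hz
      by_cases hzm : a < z
      · simp only [if_pos hzm]
        exact (hmG ⟨hzm, hz.2⟩).symm
      · simp [if_neg hzm]
  · intro t ht
    by_cases hzm : a < t
    · simp only [if_pos hzm]; exact hs2 t ⟨hzm, ht.2⟩
    · simp only [if_neg hzm]; exact hG2 t ⟨ht.1, by push_neg at hzm; linarith⟩
  · intro t ht
    simp [if_pos ht.1]

def SolP (d g₀ : ℝ → ℝ) (r : ℝ) : Prop :=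
  ∃ s : ℝ → ℝ, AnalyticOnNhd ℝ s (Set.Ioo (-r) r) ∧
    (∀ t ∈ Set.Ioo (-r) r, s t ^ 2 = d t) ∧ s =ᶠ[𝓝 0] g₀

lemma solP_mono {d g₀ : ℝ → ℝ} {r r' : ℝ} (hr : 0 < r) (hrr : r ≤ r') (h : SolP d g₀ r') :
    SolP d g₀ r := by
  obtain ⟨s, h1, h2, h3⟩ := h
  have hsub : Set.Ioo (-r) r ⊆ Set.Ioo (-r') r' := Set.Ioo_subset_Ioo (by linarith) hrr
  exact ⟨s, h1.mono hsub, fun t ht => h2 t (hsub ht), h3⟩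

lemma global_sqrt {d : ℝ → ℝ} (hd : AnalyticOnNhd ℝ d Set.univ) (hpos : ∀ t, 0 ≤ d t)
    (hne : ∃ t, d t ≠ 0) :
    ∃ s : ℝ → ℝ, AnalyticOnNhd ℝ s Set.univ ∧ ∀ t, s t ^ 2 = d t := by
  obtain ⟨g₀, hg₀, hg₀2⟩ := local_sqrt hd hpos hne 0
  obtain ⟨ρ, hρ, hballρ⟩ := Metric.eventually_nhds_iff_ball.mp
    (hg₀.eventually_analyticAt.and hg₀2)
  have hmemρ : ∀ t, t ∈ Set.Ioo (-ρ) ρ → t ∈ Metric.ball (0 : ℝ) ρ := by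
    intro t ht; rw [Real.ball_eq_Ioo]; simpa using ht
  have hPρ : SolP d g₀ ρ :=
    ⟨g₀, fun t ht => (hballρ t (hmemρ t ht)).1, fun t ht => (hballρ t (hmemρ t ht)).2,
      Filter.EventuallyEq.rfl⟩
  -- all radii work
  have hall : ∀ r, 0 < r → SolP d g₀ r := by
    intro r₁ hr₁
    by_contra hnP
    set B := {r : ℝ | 0 < r ∧ SolP d g₀ r} with hB
    have hr₂ : (0 : ℝ) < min ρ r₁ / 2 := by
      have := lt_min hρ hr₁; positivity
    have hr₂B : min ρ r₁ / 2 ∈ B := by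
      refine ⟨hr₂, solP_mono hr₂ ?_ hPρ⟩
      have := min_le_left ρ r₁; linarith
    have hBne : B.Nonempty := ⟨_, hr₂B⟩
    have hBbd : BddAbove B := by
      refine ⟨r₁, fun b hb => ?_⟩
      by_contra hcon
      push_neg at hcon
      exact hnP (solP_mono hr₁ hcon.le hb.2)
    set m := sSup B with hm
    have hm_lb : min ρ r₁ / 2 ≤ m := le_csSup hBbd hr₂B
    have hmpos : 0 < m := lt_of_lt_of_le hr₂ hm_lb
    have hPlt : ∀ r, 0 < r ∧ r < m → ∃ s : ℝ → ℝ, AnalyticOnNhd ℝ s (Set.Ioo (-r) r) ∧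
        (∀ t ∈ Set.Ioo (-r) r, s t ^ 2 = d t) ∧ s =ᶠ[𝓝 0] g₀ := by
      rintro r ⟨hr, hrm⟩
      obtain ⟨b, hbB, hb⟩ := exists_lt_of_lt_csSup hBne hrm
      exact solP_mono hr hb.le hbB.2
    choose F hF1 hF2 hF3 using hPlt
    have harg : ∀ t : ℝ, |t| < m → 0 < (|t| + m) / 2 ∧ (|t| + m) / 2 < m := by
      intro t h
      constructor
      · have := abs_nonneg t; linarith
      · linarith
    set sm : ℝ → ℝ := fun t => if h : |t| < m then F ((|t| + m) / 2) (harg t h) t else 0 with hsm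
    -- key : sm agrees with each F r on its interval
    have key : ∀ r (hr : 0 < r ∧ r < m), ∀ t ∈ Set.Ioo (-r) r, sm t = F r hr t := by
      intro r hr t ht
      have htr : |t| < r := abs_lt.2 ⟨by linarith [ht.1], ht.2⟩
      have htm : |t| < m := lt_trans htr hr.2
      have hsmt : sm t = F ((|t| + m) / 2) (harg t htm) t := by
        rw [hsm]; simp [dif_pos htm]
      set r' := (|t| + m) / 2 with hr'
      have htr' : |t| < r' := by
        have := (harg t htm).2; rw [hr']; linarith
      rw [hsmt]
      rcases le_total r' r with h | h
      · exact sol_unique (harg t htm).1 h (hF1 _ _) (hF1 r hr) (hF3 _ _) (hF3 r hr)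
          ⟨neg_lt_of_abs_lt htr', lt_of_abs_lt htr'⟩
      · exact (sol_unique hr.1 h (hF1 r hr) (hF1 _ _) (hF3 r hr) (hF3 _ _)
          ⟨ht.1, ht.2⟩).symm
    have hsm_an : AnalyticOnNhd ℝ sm (Set.Ioo (-m) m) := by
      intro t₀ ht₀
      have htm : |t₀| < m := abs_lt.2 ⟨by linarith [ht₀.1], ht₀.2⟩
      set r := (|t₀| + m) / 2 with hr
      have hrprop : 0 < r ∧ r < m := harg t₀ htm
      have htr : |t₀| < r := by rw [hr]; linarith
      have hev : ∀ᶠ t in 𝓝 t₀, |t| < r :=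
        continuous_abs.continuousAt.eventually_lt continuousAt_const htr
      have hcongr : F r hrprop =ᶠ[𝓝 t₀] sm := by
        filter_upwards [hev] with t ht
        exact (key r hrprop t ⟨neg_lt_of_abs_lt ht, lt_of_abs_lt ht⟩).symm
      exact (hF1 r hrprop t₀ ⟨neg_lt_of_abs_lt htr, lt_of_abs_lt htr⟩).congr hcongr
    have hsm_sq : ∀ t ∈ Set.Ioo (-m) m, sm t ^ 2 = d t := by
      intro t ht
      have htm : |t| < m := abs_lt.2 ⟨by linarith [ht.1], ht.2⟩
      have hrprop : 0 < (|t| + m) / 2 ∧ (|t| + m) / 2 < m := harg t htm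
      have htr : |t| < (|t| + m) / 2 := by linarith
      rw [key _ hrprop t ⟨neg_lt_of_abs_lt htr, lt_of_abs_lt htr⟩]
      exact hF2 _ hrprop t ⟨neg_lt_of_abs_lt htr, lt_of_abs_lt htr⟩
    have hsm_0 : sm =ᶠ[𝓝 0] g₀ := by
      have h0m : |(0 : ℝ)| < m := by simpa using hmpos
      have hrprop : 0 < (|(0:ℝ)| + m) / 2 ∧ (|(0:ℝ)| + m) / 2 < m := harg 0 h0m
      have htr : |(0:ℝ)| < (|(0:ℝ)| + m) / 2 := by simp; linarith [hrprop.1]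
      have hev : ∀ᶠ t in 𝓝 (0:ℝ), |t| < (|(0:ℝ)| + m) / 2 :=
        continuous_abs.continuousAt.eventually_lt continuousAt_const htr
      have h1 : sm =ᶠ[𝓝 0] F _ hrprop := by
        filter_upwards [hev] with t ht
        exact key _ hrprop t ⟨neg_lt_of_abs_lt ht, lt_of_abs_lt ht⟩
      exact h1.trans (hF3 _ hrprop)
    -- extend right then left
    obtain ⟨δ₁, hδ₁, s₁, hs₁a, hs₁2, hs₁e⟩ :=
      extend_right hd hpos hne (show -m < m by linarith) hsm_an hsm_sq
    obtain ⟨δ₂, hδ₂, s₂, hs₂a, hs₂2, hs₂e⟩ :=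
      extend_left hd hpos hne (show -m < m + δ₁ by linarith) hs₁a hs₁2
    set r₃ := m + min δ₁ δ₂ / 2 with hr₃
    have hδ : 0 < min δ₁ δ₂ := lt_min hδ₁ hδ₂
    have hr₃m : m < r₃ := by rw [hr₃]; linarith
    have hsub : Set.Ioo (-r₃) r₃ ⊆ Set.Ioo (-m - δ₂) (m + δ₁) := by
      apply Set.Ioo_subset_Ioo
      · have := min_le_right δ₁ δ₂; rw [hr₃]; linarith
      · have := min_le_left δ₁ δ₂; rw [hr₃]; linarith
    have hP₃ : SolP d g₀ r₃ := by
      refine ⟨s₂, hs₂a.mono hsub, fun t ht => hs₂2 t (hsub ht), ?_⟩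
      have hm0 : Set.Ioo (-m) m ∈ 𝓝 (0 : ℝ) := isOpen_Ioo.mem_nhds (by constructor <;> simp [hmpos] <;> linarith)
      have hev : s₂ =ᶠ[𝓝 0] sm := by
        filter_upwards [hm0] with t ht
        rw [hs₂e ⟨ht.1, by linarith [ht.2]⟩, hs₁e ht]
      exact hev.trans hsm_0
    have : r₃ ≤ m := le_csSup hBbd ⟨by linarith, hP₃⟩
    linarith
  -- assemble global solution
  choose G hG1 hG2 hG3 using hall
  have hargG : ∀ t : ℝ, (0 : ℝ) < |t| + 1 := fun t => by have := abs_nonneg t; linarith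
  set s : ℝ → ℝ := fun t => G (|t| + 1) (hargG t) t with hs
  have key2 : ∀ (r : ℝ) (hr : 0 < r) (t : ℝ), |t| < r → s t = G r hr t := by
    intro r hr t ht
    rw [hs]
    rcases le_total (|t| + 1) r with h | h
    · exact sol_unique (hargG t) h (hG1 _ _) (hG1 r hr) (hG3 _ _) (hG3 r hr)
        ⟨by simp; linarith [neg_abs_le t], by linarith [le_abs_self t]⟩
    · exact (sol_unique hr h (hG1 r hr) (hG1 _ _) (hG3 r hr) (hG3 _ _)
        ⟨neg_lt_of_abs_lt ht, lt_of_abs_lt ht⟩).symm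
  refine ⟨s, fun t₀ _ => ?_, fun t => ?_⟩
  · have htr : |t₀| < |t₀| + 2 := by linarith
    have hrpos : (0:ℝ) < |t₀| + 2 := by have := abs_nonneg t₀; linarith
    have hev : ∀ᶠ t in 𝓝 t₀, |t| < |t₀| + 2 :=
      continuous_abs.continuousAt.eventually_lt continuousAt_const htr
    have hcongr : G (|t₀| + 2) hrpos =ᶠ[𝓝 t₀] s := by
      filter_upwards [hev] with t ht
      exact (key2 _ hrpos t ht).symm
    exact (hG1 _ hrpos t₀ ⟨neg_lt_of_abs_lt htr, lt_of_abs_lt htr⟩).congr hcongr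
  · have htr : |t| < |t| + 1 := by linarith
    rw [key2 _ (hargG t) t htr]
    exact hG2 _ (hargG t) t ⟨neg_lt_of_abs_lt htr, lt_of_abs_lt htr⟩



/-- A hyperbolic monic quadratic `x² - a₁(t)x + a₂(t)` with real-analytic coefficients
admits real-analytic root functions `λ₁, λ₂` on all of `ℝ`. -/
theorem stmt17 (a₁ a₂ : ℝ → ℝ)
    (h₁ : AnalyticOnNhd ℝ a₁ Set.univ) (h₂ : AnalyticOnNhd ℝ a₂ Set.univ)
    (hhyp : ∀ t, 0 ≤ a₁ t ^ 2 - 4 * a₂ t) :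
    ∃ l₁ l₂ : ℝ → ℝ, AnalyticOnNhd ℝ l₁ Set.univ ∧ AnalyticOnNhd ℝ l₂ Set.univ ∧
      ∀ t x : ℝ, x ^ 2 - a₁ t * x + a₂ t = (x - l₁ t) * (x - l₂ t) := by
  set d : ℝ → ℝ := fun t => a₁ t ^ 2 - 4 * a₂ t with hd_def
  have hd : AnalyticOnNhd ℝ d Set.univ :=
    (h₁.pow 2).sub (analyticOnNhd_const.mul h₂)
  obtain ⟨s, hs_an, hs_sq⟩ : ∃ s : ℝ → ℝ, AnalyticOnNhd ℝ s Set.univ ∧ ∀ t, s t ^ 2 = d t := by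
    by_cases hne : ∃ t, d t ≠ 0
    · exact global_sqrt hd hhyp hne
    · push_neg at hne
      exact ⟨fun _ => 0, analyticOnNhd_const, fun t => by simp [hne t]⟩
  refine ⟨fun t => (a₁ t + s t) / 2, fun t => (a₁ t - s t) / 2, ?_, ?_, ?_⟩
  · exact (h₁.add hs_an).div analyticOnNhd_const (fun t _ => two_ne_zero)
  · exact (h₁.sub hs_an).div analyticOnNhd_const (fun t _ => two_ne_zero)
  · intro t x
    have hs := hs_sq t
    simp only [hd_def] at hs
    simp only []
    linear_combination (1/4 : ℝ) * hs
end
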